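/- Let p > 1 and n ≥ 1 and let B(n) be a constant such that there exists, for every t > 0, a countable family of convex bodies {K_{t,j}} with overlap function ψ(x,t) = Σ_j 1_{K_{t,j}}(x) satisfying: ψ ≤ B(n) everywhere; ψ(x,t) = 0 whenever t > M₁f(x); ψ(x,t) ≥ 1 whenever f(x) > t; and ∫ t ψ(x,t) dx = ∫ ψ(x,t) f(x) dx for all t > 0. Then ‖M₁ f‖_{L^p}^p ≥ (1 + 1/((p-1)B(n))) ‖f‖_{L^p}^p. -/

import Mathlib

open MeasureTheory Set
open scoped ENNReal


lemma aux_inner (p : ℝ) (hp : 1 < p) (a : ℝ) (ha : 0 ≤ a) :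
    ∫⁻ t in Set.Ioi (0:ℝ), ENNReal.ofReal (t ^ (p-2)) * ENNReal.ofReal (a - t)
      = ENNReal.ofReal (a ^ p * (1 / (p * (p-1)))) := by
  have hp0 : (0:ℝ) < p := by linarith
  have hp1 : (0:ℝ) < p - 1 := by linarith
  have hr : (-1:ℝ) < p - 2 := by linarith
  set h : ℝ → ℝ := fun t => t ^ (p-2) * max (a - t) 0 with hh
  -- rewrite the lintegral integrand
  have step1 : ∫⁻ t in Set.Ioi (0:ℝ), ENNReal.ofReal (t ^ (p-2)) * ENNReal.ofReal (a - t)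
      = ∫⁻ t in Set.Ioi (0:ℝ), ENNReal.ofReal (h t) := by
    refine setLIntegral_congr_fun measurableSet_Ioi ?_
    intro t ht
    dsimp only
    rw [hh]
    have h1 : ENNReal.ofReal (a - t) = ENNReal.ofReal (max (a - t) 0) := by
      rcases le_total (a - t) 0 with h' | h'
      · simp [ENNReal.ofReal_eq_zero.mpr h', max_eq_right h']
      · rw [max_eq_left h']
    rw [h1, ← ENNReal.ofReal_mul (Real.rpow_nonneg (le_of_lt ht) _)]
  -- integrability of h on Ioi 0
  have hrint : IntervalIntegrable (fun t : ℝ => t ^ (p-2)) volume 0 a :=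
    intervalIntegral.intervalIntegrable_rpow' hr
  have hrint' : IntegrableOn (fun t : ℝ => t ^ (p-2)) (Ioc 0 a) volume :=
    (intervalIntegrable_iff_integrableOn_Ioc_of_le ha).mp hrint
  have hmeas_h : Measurable h := by
    have : Measurable fun t : ℝ => t ^ (p-2) := measurable_id.pow measurable_const
    exact this.mul ((continuous_const.sub continuous_id).max continuous_const).measurable
  have hint1 : IntegrableOn h (Ioc 0 a) volume := by
    refine Integrable.mono' (hrint'.const_mul a) hmeas_h.aestronglyMeasurable.restrict ?_
    refine (ae_restrict_mem measurableSet_Ioc).mono fun t ht => ?_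
    have ht0 : 0 < t := ht.1
    have h1 : 0 ≤ t ^ (p-2) := Real.rpow_nonneg ht0.le _
    have h2 : max (a - t) 0 ≤ a := max_le (by linarith [ht0]) ha
    have h3 : 0 ≤ max (a - t) 0 := le_max_right _ _
    rw [Real.norm_eq_abs, abs_of_nonneg (mul_nonneg h1 h3)]
    calc t ^ (p-2) * max (a - t) 0 ≤ t ^ (p-2) * a := by nlinarith
      _ = a * t ^ (p-2) := mul_comm _ _
  have hzeroIoi : ∀ t ∈ Ioi a, h t = 0 := by
    intro t ht
    have : max (a - t) 0 = 0 := max_eq_right (by simp at ht; linarith)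
    simp [hh, this]
  have hint2 : IntegrableOn h (Ioi a) volume := by
    refine (integrable_zero _ _ _).congr ?_
    refine (ae_restrict_mem measurableSet_Ioi).mono fun t ht => (hzeroIoi t ht).symm
  have hsplit : Ioc 0 a ∪ Ioi a = Ioi (0:ℝ) := Ioc_union_Ioi_eq_Ioi ha
  have hint : IntegrableOn h (Ioi 0) volume := by
    rw [← hsplit]; exact hint1.union hint2
  -- compute the real integral
  have hIoiA : ∫ t in Ioi a, h t = 0 := by
    rw [setIntegral_congr_fun measurableSet_Ioi hzeroIoi]; simp
  have hIoc : ∫ t in Ioc 0 a, h t = a ^ p * (1 / (p * (p-1))) := by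
    have hcong : ∀ t ∈ Ioc (0:ℝ) a, h t = a * t ^ (p-2) - t ^ (p-1) := by
      intro t ht
      have ht0 : 0 < t := ht.1
      have : max (a - t) 0 = a - t := max_eq_left (by linarith [ht.2])
      have h2 : t ^ (p-2) * t = t ^ (p-1) := by
        rw [← Real.rpow_add_one ht0.ne' (p-2)]; congr 1; ring
      rw [hh]
      simp only [this, mul_sub, mul_comm (t ^ (p-2)) a, h2]
    rw [setIntegral_congr_fun measurableSet_Ioc hcong, ← intervalIntegral.integral_of_le ha]
    have i1 : IntervalIntegrable (fun t : ℝ => a * t ^ (p-2)) volume 0 a := hrint.const_mul a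
    have i2 : IntervalIntegrable (fun t : ℝ => t ^ (p-1)) volume 0 a :=
      intervalIntegral.intervalIntegrable_rpow' (by linarith)
    rw [intervalIntegral.integral_sub i1 i2, intervalIntegral.integral_const_mul,
      integral_rpow (Or.inl hr), integral_rpow (Or.inl (by linarith : (-1:ℝ) < p - 1))]
    have e1 : p - 2 + 1 = p - 1 := by ring
    have e2 : p - 1 + 1 = p := by ring
    rw [e1, e2, Real.zero_rpow hp1.ne', Real.zero_rpow hp0.ne']
    have haa : a * a ^ (p-1) = a ^ p := by
      have e4 : a ^ p = a ^ (1 + (p-1)) := by norm_num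
      rw [e4, Real.rpow_add' ha (by rw [show (1:ℝ)+(p-1)=p by ring]; exact hp0.ne'),
        Real.rpow_one]
    rw [sub_zero, sub_zero, mul_div_assoc', haa]
    field_simp
    ring
  have hreal : ∫ t in Ioi (0:ℝ), h t = a ^ p * (1 / (p * (p-1))) := by
    rw [← hsplit, setIntegral_union (Ioc_disjoint_Ioi le_rfl) measurableSet_Ioi hint1 hint2,
      hIoc, hIoiA, add_zero]
  rw [step1, ← ofReal_integral_eq_lintegral_ofReal hint
      ((ae_restrict_mem measurableSet_Ioi).mono fun t ht => by
        exact mul_nonneg (Real.rpow_nonneg (le_of_lt ht) _) (le_max_right _ _)),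
    hreal]


lemma key_ineq {α : Type*} [MeasurableSpace α] (μ : Measure α)
    (Bn t : ℝ) (hBn : 1 ≤ Bn) (ht : 0 < t)
    (f ψt Mf : α → ℝ)
    (hf0 : ∀ x, 0 ≤ f x) (hfm : Measurable f) (hfint : Integrable f μ)
    (hMint : Integrable (fun x => max (f x - t) 0) μ)
    (hψm : Measurable ψt) (hψ0 : ∀ x, 0 ≤ ψt x) (hub : ∀ x, ψt x ≤ Bn)
    (hzero : ∀ x, Mf x < t → ψt x = 0) (hone : ∀ x, t < f x → 1 ≤ ψt x)
    (hMm : Measurable Mf)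
    (hbal : ∫ x, t * ψt x ∂μ = ∫ x, ψt x * f x ∂μ) :
    ENNReal.ofReal t * ENNReal.ofReal Bn * μ {x | t < f x} + ∫⁻ x, ENNReal.ofReal (f x - t) ∂μ
      ≤ ENNReal.ofReal t * ENNReal.ofReal Bn * μ {x | t ≤ Mf x} := by
  have hBn0 : (0:ℝ) < Bn := by linarith
  set S := {x | t ≤ Mf x} with hSdef
  set A := {x | t < f x} with hAdef
  have hSm : MeasurableSet S := measurableSet_le measurable_const hMm
  have hAm : MeasurableSet A := measurableSet_lt measurable_const hfm
  have hofmax : ∀ r : ℝ, ENNReal.ofReal r = ENNReal.ofReal (max r 0) := by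
    intro r
    rcases le_total r 0 with h' | h'
    · simp [ENNReal.ofReal_eq_zero.mpr h', max_eq_right h']
    · rw [max_eq_left h']
  by_cases hA : μ A = 0
  · have hV : ∫⁻ x, ENNReal.ofReal (f x - t) ∂μ = 0 := by
      have hae : ∀ᵐ x ∂μ, f x ≤ t := by
        rw [ae_iff]
        simpa [hAdef, not_le] using hA
      calc ∫⁻ x, ENNReal.ofReal (f x - t) ∂μ = ∫⁻ _, 0 ∂μ := by
            apply lintegral_congr_ae
            filter_upwards [hae] with x hx
            simp [ENNReal.ofReal_eq_zero.mpr (by linarith : f x - t ≤ 0)]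
        _ = 0 := lintegral_zero
    rw [hA, hV, mul_zero, add_zero]
    exact zero_le
  by_cases hS : μ S = ∞
  · rw [hS, ENNReal.mul_top (by
      refine mul_ne_zero ?_ ?_ <;> simp [ENNReal.ofReal_eq_zero, not_le, ht, hBn0])]
    exact le_top
  -- main case
  have hsub : A ⊆ S := by
    intro x hx
    by_contra h
    have h1 := hzero x (not_le.mp h)
    have h2 := hone x hx
    linarith
  have hψS : ∀ x, x ∉ S → ψt x = 0 := fun x hx => hzero x (not_le.mp hx)
  have hψint : Integrable ψt μ := by
    refine ⟨hψm.aestronglyMeasurable, ?_⟩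
    rw [hasFiniteIntegral_iff_norm]
    calc ∫⁻ x, ENNReal.ofReal ‖ψt x‖ ∂μ
        ≤ ∫⁻ x, S.indicator (fun _ => ENNReal.ofReal Bn) x ∂μ := by
          refine lintegral_mono fun x => ?_
          by_cases hx : x ∈ S
          · rw [indicator_of_mem hx]
            exact ENNReal.ofReal_le_ofReal (by rw [Real.norm_eq_abs, abs_of_nonneg (hψ0 x)]; exact hub x)
          · rw [indicator_of_notMem hx, hψS x hx]
            simp
      _ = ENNReal.ofReal Bn * μ S := lintegral_indicator_const hSm _
      _ < ⊤ := ENNReal.mul_lt_top ENNReal.ofReal_lt_top (lt_top_iff_ne_top.mpr hS)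
  set D := S \ A with hDdef
  have hDm : MeasurableSet D := hSm.diff hAm
  have hD : μ D ≠ ⊤ := ((measure_mono diff_subset).trans_lt (lt_top_iff_ne_top.mpr hS)).ne
  have hA' : μ A ≠ ⊤ := ((measure_mono hsub).trans_lt (lt_top_iff_ne_top.mpr hS)).ne
  -- integrabilities
  have hψf_int : Integrable (fun x => ψt x * f x) μ := by
    refine Integrable.mono (hfint.const_mul Bn) (hψm.mul hfm).aestronglyMeasurable
      (Filter.Eventually.of_forall fun x => ?_)
    rw [Real.norm_eq_abs, Real.norm_eq_abs, abs_of_nonneg (mul_nonneg (hψ0 x) (hf0 x)),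
      abs_of_nonneg (mul_nonneg hBn0.le (hf0 x))]
    exact mul_le_mul_of_nonneg_right (hub x) (hf0 x)
  have hmaxM : Measurable fun x => max (f x - t) 0 :=
    (hfm.sub measurable_const).max measurable_const
  have hmaxN : Measurable fun x => max (t - f x) 0 :=
    (measurable_const.sub hfm).max measurable_const
  have hP : Integrable (fun x => ψt x * max (f x - t) 0) μ := by
    refine Integrable.mono (hMint.const_mul Bn) (hψm.mul hmaxM).aestronglyMeasurable
      (Filter.Eventually.of_forall fun x => ?_)
    have h3 : (0:ℝ) ≤ max (f x - t) 0 := le_max_right _ _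
    rw [Real.norm_eq_abs, Real.norm_eq_abs, abs_of_nonneg (mul_nonneg (hψ0 x) h3),
      abs_of_nonneg (mul_nonneg hBn0.le h3)]
    exact mul_le_mul_of_nonneg_right (hub x) h3
  have hindint : Integrable (D.indicator fun _ => Bn * t) μ :=
    (integrableOn_const hD).integrable_indicator hDm
  have hNle : ∀ x, ψt x * max (t - f x) 0 ≤ D.indicator (fun _ => Bn * t) x := by
    intro x
    by_cases hxA : x ∈ A
    · have : max (t - f x) 0 = 0 := max_eq_right (by simp only [hAdef, mem_setOf_eq] at hxA; linarith)
      rw [this, mul_zero]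
      exact indicator_nonneg (fun _ _ => by positivity) x
    by_cases hxS : x ∈ S
    · have hxD : x ∈ D := ⟨hxS, hxA⟩
      rw [indicator_of_mem hxD]
      have h1 : max (t - f x) 0 ≤ t := max_le (by linarith [hf0 x]) ht.le
      exact mul_le_mul (hub x) h1 (le_max_right _ _) hBn0.le
    · rw [hψS x hxS, zero_mul]
      exact indicator_nonneg (fun _ _ => by positivity) x
  have hN : Integrable (fun x => ψt x * max (t - f x) 0) μ := by
    refine Integrable.mono hindint (hψm.mul hmaxN).aestronglyMeasurable
      (Filter.Eventually.of_forall fun x => ?_)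
    have h3 : (0:ℝ) ≤ max (t - f x) 0 := le_max_right _ _
    rw [Real.norm_eq_abs, Real.norm_eq_abs, abs_of_nonneg (mul_nonneg (hψ0 x) h3)]
    exact (hNle x).trans (le_abs_self _)
  -- balance
  have hbal2 : ∫ x, ψt x * max (f x - t) 0 ∂μ = ∫ x, ψt x * max (t - f x) 0 ∂μ := by
    have hsub2 : ∫ x, (ψt x * max (f x - t) 0 - ψt x * max (t - f x) 0) ∂μ = 0 := by
      have heq : ∀ x, ψt x * max (f x - t) 0 - ψt x * max (t - f x) 0
          = ψt x * f x - t * ψt x := by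
        intro x
        rcases le_total (f x) t with h | h
        · rw [max_eq_right (by linarith), max_eq_left (by linarith)]; ring
        · rw [max_eq_left (by linarith), max_eq_right (by linarith)]; ring
      simp_rw [heq]
      rw [integral_sub hψf_int (hψint.const_mul t), hbal, sub_self]
    have := integral_sub hP hN
    rw [hsub2] at this
    linarith [this.symm]
  -- ∫ max (f-t) 0 ≤ ∫ P
  have hMP : ∫ x, max (f x - t) 0 ∂μ ≤ ∫ x, ψt x * max (f x - t) 0 ∂μ := by
    refine integral_mono hMint hP fun x => ?_
    rcases le_total (f x) t with h | h
    · rw [max_eq_right (by linarith)]; simp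
    rcases eq_or_lt_of_le h with h' | h'
    · rw [← h']; simp
    · exact le_mul_of_one_le_left (le_max_right _ _) (hone x h')
  have hNind : ∫ x, ψt x * max (t - f x) 0 ∂μ ≤ Bn * t * (μ D).toReal := by
    calc ∫ x, ψt x * max (t - f x) 0 ∂μ ≤ ∫ x, D.indicator (fun _ => Bn * t) x ∂μ :=
          integral_mono hN hindint hNle
      _ = (μ D).toReal • (Bn * t) := integral_indicator_const _ hDm
      _ = Bn * t * (μ D).toReal := by rw [smul_eq_mul]; ring
  have hMd : ∫ x, max (f x - t) 0 ∂μ ≤ Bn * t * (μ D).toReal :=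
    (hMP.trans (le_of_eq hbal2)).trans hNind
  -- measure split
  have hμsplit : μ S = μ A + μ D := by
    have h1 := measure_inter_add_diff S hAm (μ := μ)
    rw [Set.inter_eq_right.mpr hsub] at h1
    exact h1.symm
  have htoReal : (μ S).toReal = (μ A).toReal + (μ D).toReal := by
    rw [hμsplit, ENNReal.toReal_add hA' hD]
  -- final ENNReal computation
  have hVeq : ∫⁻ x, ENNReal.ofReal (f x - t) ∂μ = ENNReal.ofReal (∫ x, max (f x - t) 0 ∂μ) := by
    rw [ofReal_integral_eq_lintegral_ofReal hMint
      (Filter.Eventually.of_forall fun x => le_max_right _ _)]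
    exact lintegral_congr fun x => hofmax _
  have hintM0 : 0 ≤ ∫ x, max (f x - t) 0 ∂μ :=
    integral_nonneg fun x => le_max_right _ _
  have hμAeq : μ A = ENNReal.ofReal (μ A).toReal := (ENNReal.ofReal_toReal hA').symm
  have hμSeq : μ S = ENNReal.ofReal (μ S).toReal := (ENNReal.ofReal_toReal hS).symm
  rw [hVeq, hμAeq, hμSeq]
  rw [← ENNReal.ofReal_mul ht.le, ← ENNReal.ofReal_mul (by positivity),
    ← ENNReal.ofReal_mul (by positivity),
    ← ENNReal.ofReal_add (by positivity) hintM0]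
  refine ENNReal.ofReal_le_ofReal ?_
  rw [htoReal]
  have h0A : 0 ≤ (μ A).toReal := ENNReal.toReal_nonneg
  nlinarith [hMd, ENNReal.toReal_nonneg (a := μ D)]


theorem stmt_10 (n : ℕ) (hn : 1 ≤ n) (p : ℝ) (hp : 1 < p)
    (Bn : ℝ) (hBn : 1 ≤ Bn)
    (f M₁f : EuclideanSpace ℝ (Fin n) → ℝ)
    (hfc : Continuous f) (hf0 : ∀ x, 0 ≤ f x) (hfsupp : HasCompactSupport f)
    (hMmeas : Measurable M₁f)
    (K : ℝ → ℕ → Set (EuclideanSpace ℝ (Fin n)))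
    (hKconv : ∀ t > (0 : ℝ), ∀ j, Convex ℝ (K t j))
    (hKcomp : ∀ t > (0 : ℝ), ∀ j, IsCompact (K t j))
    (hKint : ∀ t > (0 : ℝ), ∀ j, (interior (K t j)).Nonempty)
    (ψ : EuclideanSpace ℝ (Fin n) → ℝ → ℝ)
    (hψ : ∀ x, ∀ t > (0 : ℝ), ψ x t = ∑' j : ℕ, (K t j).indicator (fun _ => (1 : ℝ)) x)
    (hub : ∀ x, ∀ t > (0 : ℝ), ψ x t ≤ Bn)
    (hzero : ∀ x, ∀ t > (0 : ℝ), M₁f x < t → ψ x t = 0)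
    (hone : ∀ x, ∀ t > (0 : ℝ), t < f x → 1 ≤ ψ x t)
    (hbal : ∀ t > (0 : ℝ), ∫ x, t * ψ x t = ∫ x, ψ x t * f x) :
    ENNReal.ofReal (1 + 1 / ((p - 1) * Bn)) * ∫⁻ x, ENNReal.ofReal (f x ^ p)
      ≤ ∫⁻ x, ENNReal.ofReal (M₁f x ^ p) := by
  have hp0 : (0:ℝ) < p := by linarith
  have hp1 : (0:ℝ) < p - 1 := by linarith
  have hBn0 : (0:ℝ) < Bn := by linarith
  have hfm : Measurable f := hfc.measurable
  have hfint : Integrable f := hfc.integrable_of_hasCompactSupport hfsupp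
  -- measurability of ψ(·, t)
  have hψm : ∀ t : ℝ, 0 < t → Measurable (fun x => ψ x t) := by
    intro t ht
    have heq : (fun x => ψ x t)
        = fun x => (∑' j : ℕ, (K t j).indicator (fun _ => (1:ℝ≥0∞)) x).toReal := by
      funext x
      rw [hψ x t ht, ENNReal.tsum_toReal_eq
        (fun j => by by_cases hx : x ∈ K t j <;> simp [hx])]
      exact tsum_congr fun j => by by_cases hx : x ∈ K t j <;> simp [hx]
    rw [heq]
    exact (Measurable.ennreal_tsum fun j =>
      measurable_const.indicator (hKcomp t ht j).measurableSet).ennreal_toReal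
  have hψ0 : ∀ (x) (t : ℝ), 0 < t → 0 ≤ ψ x t := by
    intro x t ht
    rw [hψ x t ht]
    exact tsum_nonneg fun j => Set.indicator_nonneg (fun _ _ => zero_le_one) x
  -- integrability of (f - t)⁺
  have hMintt : ∀ t : ℝ, 0 < t → Integrable (fun x => max (f x - t) 0) := by
    intro t ht
    refine Continuous.integrable_of_hasCompactSupport
      ((hfc.sub continuous_const).max continuous_const) ?_
    refine hfsupp.mono ?_
    intro x hx
    simp only [Function.mem_support] at hx ⊢
    intro hfx
    apply hx
    rw [hfx]
    exact max_eq_right (by linarith)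
  -- the key per-level inequality
  have KEY : ∀ t : ℝ, 0 < t →
      ENNReal.ofReal t * ENNReal.ofReal Bn * volume {x | t < f x}
          + ∫⁻ x, ENNReal.ofReal (f x - t)
        ≤ ENNReal.ofReal t * ENNReal.ofReal Bn * volume {x | t ≤ M₁f x} := by
    intro t ht
    exact key_ineq volume Bn t hBn ht f (fun x => ψ x t) M₁f hf0 hfm hfint
      (hMintt t ht) (hψm t ht) (fun x => hψ0 x t ht) (fun x => hub x t ht)
      (fun x hx => hzero x t ht hx) (fun x hx => hone x t ht hx) hMmeas (hbal t ht)
  -- layer cake for f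
  have Lf := lintegral_rpow_eq_lintegral_meas_lt_mul volume
    (Filter.Eventually.of_forall hf0) hfm.aemeasurable hp0
  -- layer cake for max(M₁f, 0)
  set g : EuclideanSpace ℝ (Fin n) → ℝ := fun x => max (M₁f x) 0 with hgdef
  have hgm : Measurable g := hMmeas.max measurable_const
  have Lg := lintegral_rpow_eq_lintegral_meas_le_mul (f := g) volume
    (Filter.Eventually.of_forall fun x => le_max_right (M₁f x) 0) hgm.aemeasurable hp0
  have hgset : ∫⁻ t in Ioi (0:ℝ), volume {a | t ≤ g a} * ENNReal.ofReal (t ^ (p-1))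
      = ∫⁻ t in Ioi (0:ℝ), volume {a | t ≤ M₁f a} * ENNReal.ofReal (t ^ (p-1)) := by
    refine setLIntegral_congr_fun measurableSet_Ioi ?_
    intro t ht
    dsimp only
    congr 2
    ext a
    simp only [hgdef, mem_setOf_eq, le_max_iff]
    exact ⟨fun h => h.resolve_right (not_le.mpr ht), Or.inl⟩
  have hgle : ∫⁻ x, ENNReal.ofReal (g x ^ p) ≤ ∫⁻ x, ENNReal.ofReal (M₁f x ^ p) := by
    refine lintegral_mono fun x => ?_
    rcases le_total 0 (M₁f x) with h | h
    · rw [hgdef]; simp only [max_eq_left h]; exact le_rfl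
    · rw [hgdef]; simp only [max_eq_right h, Real.zero_rpow hp0.ne']; simp
  -- pointwise inequality in t
  have claimB : ∀ t : ℝ, t ∈ Ioi (0:ℝ) →
      volume {a | t < f a} * ENNReal.ofReal (t ^ (p-1))
          + (ENNReal.ofReal Bn)⁻¹ * (ENNReal.ofReal (t ^ (p-2)) * ∫⁻ x, ENNReal.ofReal (f x - t))
        ≤ volume {a | t ≤ M₁f a} * ENNReal.ofReal (t ^ (p-1)) := by
    intro t ht
    rw [mem_Ioi] at ht
    have hb1 : (ENNReal.ofReal Bn)⁻¹ * ENNReal.ofReal Bn = 1 :=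
      ENNReal.inv_mul_cancel (by simp [ENNReal.ofReal_eq_zero, not_le, hBn0])
        ENNReal.ofReal_ne_top
    have ht2 : ENNReal.ofReal (t ^ (p-2)) * ENNReal.ofReal t = ENNReal.ofReal (t ^ (p-1)) := by
      rw [← ENNReal.ofReal_mul (Real.rpow_nonneg ht.le _),
        ← Real.rpow_add_one ht.ne' (p-2)]
      congr 2
      ring
    have c1 : ∀ X : ℝ≥0∞, ((ENNReal.ofReal Bn)⁻¹ * ENNReal.ofReal (t ^ (p-2)))
        * (ENNReal.ofReal t * ENNReal.ofReal Bn * X) = X * ENNReal.ofReal (t ^ (p-1)) := by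
      intro X
      calc ((ENNReal.ofReal Bn)⁻¹ * ENNReal.ofReal (t ^ (p-2)))
          * (ENNReal.ofReal t * ENNReal.ofReal Bn * X)
          = ((ENNReal.ofReal Bn)⁻¹ * ENNReal.ofReal Bn)
            * ((ENNReal.ofReal (t ^ (p-2)) * ENNReal.ofReal t) * X) := by ring
        _ = X * ENNReal.ofReal (t ^ (p-1)) := by rw [hb1, ht2, one_mul, mul_comm]
    calc volume {a | t < f a} * ENNReal.ofReal (t ^ (p-1))
        + (ENNReal.ofReal Bn)⁻¹ * (ENNReal.ofReal (t ^ (p-2)) * ∫⁻ x, ENNReal.ofReal (f x - t))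
        = ((ENNReal.ofReal Bn)⁻¹ * ENNReal.ofReal (t ^ (p-2)))
          * (ENNReal.ofReal t * ENNReal.ofReal Bn * volume {a | t < f a}
            + ∫⁻ x, ENNReal.ofReal (f x - t)) := by
          rw [mul_add, c1, mul_assoc]
      _ ≤ ((ENNReal.ofReal Bn)⁻¹ * ENNReal.ofReal (t ^ (p-2)))
          * (ENNReal.ofReal t * ENNReal.ofReal Bn * volume {a | t ≤ M₁f a}) :=
          mul_le_mul_right (KEY t ht) _
      _ = volume {a | t ≤ M₁f a} * ENNReal.ofReal (t ^ (p-1)) := c1 _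
  -- integrate claimB over t ∈ Ioi 0
  have hmono : ∫⁻ t in Ioi (0:ℝ),
      (volume {a | t < f a} * ENNReal.ofReal (t ^ (p-1))
        + (ENNReal.ofReal Bn)⁻¹ * (ENNReal.ofReal (t ^ (p-2)) * ∫⁻ x, ENNReal.ofReal (f x - t)))
      ≤ ∫⁻ t in Ioi (0:ℝ), volume {a | t ≤ M₁f a} * ENNReal.ofReal (t ^ (p-1)) := by
    refine lintegral_mono_ae ?_
    filter_upwards [ae_restrict_mem measurableSet_Ioi] with t ht
    exact claimB t ht
  have hXmeas : Measurable fun t : ℝ => volume {a | t < f a} * ENNReal.ofReal (t ^ (p-1)) := by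
    have h1 : Antitone fun t : ℝ => volume {a | t < f a} := by
      intro s t hst
      exact measure_mono fun a ha => lt_of_le_of_lt hst ha
    exact h1.measurable.mul ((measurable_id.pow measurable_const).ennreal_ofReal)
  have hsplit2 : ∫⁻ t in Ioi (0:ℝ),
      (volume {a | t < f a} * ENNReal.ofReal (t ^ (p-1))
        + (ENNReal.ofReal Bn)⁻¹ * (ENNReal.ofReal (t ^ (p-2)) * ∫⁻ x, ENNReal.ofReal (f x - t)))
      = (∫⁻ t in Ioi (0:ℝ), volume {a | t < f a} * ENNReal.ofReal (t ^ (p-1)))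
        + (ENNReal.ofReal Bn)⁻¹ * ∫⁻ t in Ioi (0:ℝ),
            ENNReal.ofReal (t ^ (p-2)) * ∫⁻ x, ENNReal.ofReal (f x - t) := by
    rw [lintegral_add_left hXmeas]
    congr 1
    exact lintegral_const_mul' _ _ (ENNReal.inv_ne_top.mpr
      (by simp [ENNReal.ofReal_eq_zero, not_le, hBn0]))
  -- Tonelli: compute the double integral
  have hT : ∫⁻ t in Ioi (0:ℝ), ENNReal.ofReal (t ^ (p-2)) * ∫⁻ x, ENNReal.ofReal (f x - t)
      = ENNReal.ofReal (1 / (p * (p-1))) * ∫⁻ x, ENNReal.ofReal (f x ^ p) := by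
    have h1 : ∫⁻ t in Ioi (0:ℝ), ENNReal.ofReal (t ^ (p-2)) * ∫⁻ x, ENNReal.ofReal (f x - t)
        = ∫⁻ t in Ioi (0:ℝ), ∫⁻ x, ENNReal.ofReal (t ^ (p-2)) * ENNReal.ofReal (f x - t) := by
      refine lintegral_congr fun t => ?_
      exact (lintegral_const_mul' _ _ ENNReal.ofReal_ne_top).symm
    have hswap : ∫⁻ t in Ioi (0:ℝ), ∫⁻ x, ENNReal.ofReal (t ^ (p-2)) * ENNReal.ofReal (f x - t)
        = ∫⁻ x, ∫⁻ t in Ioi (0:ℝ), ENNReal.ofReal (t ^ (p-2)) * ENNReal.ofReal (f x - t) := by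
      refine lintegral_lintegral_swap ?_
      refine Measurable.aemeasurable ?_
      exact ((measurable_fst.pow measurable_const).ennreal_ofReal).mul
        (((hfm.comp measurable_snd).sub measurable_fst).ennreal_ofReal)
    rw [h1, hswap]
    have h2 : ∫⁻ x, ∫⁻ t in Ioi (0:ℝ), ENNReal.ofReal (t ^ (p-2)) * ENNReal.ofReal (f x - t)
        = ∫⁻ x, ENNReal.ofReal (f x ^ p) * ENNReal.ofReal (1 / (p * (p-1))) := by
      refine lintegral_congr fun x => ?_
      rw [aux_inner p hp (f x) (hf0 x),
        ENNReal.ofReal_mul (Real.rpow_nonneg (hf0 x) _)]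
    rw [h2, lintegral_mul_const' _ _ ENNReal.ofReal_ne_top, mul_comm]
  -- assemble
  have main : (∫⁻ x, ENNReal.ofReal (f x ^ p))
      + ENNReal.ofReal (1 / ((p-1) * Bn)) * ∫⁻ x, ENNReal.ofReal (f x ^ p)
      ≤ ∫⁻ x, ENNReal.ofReal (M₁f x ^ p) := by
    have hCeq : ENNReal.ofReal p * ((ENNReal.ofReal Bn)⁻¹
        * (ENNReal.ofReal (1 / (p * (p-1))) * ∫⁻ x, ENNReal.ofReal (f x ^ p)))
        = ENNReal.ofReal (1 / ((p-1) * Bn)) * ∫⁻ x, ENNReal.ofReal (f x ^ p) := by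
      rw [← ENNReal.ofReal_inv_of_pos hBn0]
      have e1 : ENNReal.ofReal p * (ENNReal.ofReal Bn⁻¹
          * (ENNReal.ofReal (1 / (p * (p-1))) * ∫⁻ x, ENNReal.ofReal (f x ^ p)))
          = (ENNReal.ofReal p * ENNReal.ofReal (1 / (p * (p-1))) * ENNReal.ofReal Bn⁻¹)
            * ∫⁻ x, ENNReal.ofReal (f x ^ p) := by ring
      rw [e1, ← ENNReal.ofReal_mul hp0.le, ← ENNReal.ofReal_mul (by positivity)]
      congr 2
      field_simp
    calc (∫⁻ x, ENNReal.ofReal (f x ^ p))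
        + ENNReal.ofReal (1 / ((p-1) * Bn)) * ∫⁻ x, ENNReal.ofReal (f x ^ p)
        = ENNReal.ofReal p * ((∫⁻ t in Ioi (0:ℝ), volume {a | t < f a}
            * ENNReal.ofReal (t ^ (p-1)))
          + (ENNReal.ofReal Bn)⁻¹ * (ENNReal.ofReal (1 / (p * (p-1)))
            * ∫⁻ x, ENNReal.ofReal (f x ^ p))) := by
          rw [mul_add, ← Lf, hCeq]
      _ = ENNReal.ofReal p * ∫⁻ t in Ioi (0:ℝ),
            (volume {a | t < f a} * ENNReal.ofReal (t ^ (p-1))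
              + (ENNReal.ofReal Bn)⁻¹ * (ENNReal.ofReal (t ^ (p-2))
                * ∫⁻ x, ENNReal.ofReal (f x - t))) := by
          rw [hsplit2, hT]
      _ ≤ ENNReal.ofReal p * ∫⁻ t in Ioi (0:ℝ),
            volume {a | t ≤ M₁f a} * ENNReal.ofReal (t ^ (p-1)) :=
          mul_le_mul_right hmono _
      _ = ∫⁻ x, ENNReal.ofReal (g x ^ p) := by rw [Lg, hgset]
      _ ≤ ∫⁻ x, ENNReal.ofReal (M₁f x ^ p) := hgle
  have hfinal : ENNReal.ofReal (1 + 1 / ((p - 1) * Bn)) * ∫⁻ x, ENNReal.ofReal (f x ^ p)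
      = (∫⁻ x, ENNReal.ofReal (f x ^ p))
        + ENNReal.ofReal (1 / ((p-1) * Bn)) * ∫⁻ x, ENNReal.ofReal (f x ^ p) := by
    rw [ENNReal.ofReal_add zero_le_one (by positivity), ENNReal.ofReal_one, add_mul, one_mul]
  rw [hfinal]
  exact main
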